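/- In the setting where p is a projection in (M, τ) independent of a W*-subalgebra B and B-free from X = X*, the conditional expectation of pMp onto W*(Bp) preserving τ_p is given by E^{(pMp)}_{Bp}(pmp) = α⁻¹ E^{(M)}_B(pmp)·p, where α = τ(p). -/
import Mathlib


variable {M : Type*} [Ring M] [Algebra ℂ M] [StarRing M] [StarModule ℂ M]

/-- `E` is the `τ`-preserving conditional expectation onto the subalgebra `N`. -/
def IsCondExp (τ : M →ₗ[ℂ] ℂ) (N : Subalgebra ℂ M) (E : M →ₗ[ℂ] M) : Prop :=
  (∀ m, E m ∈ N) ∧ (∀ n ∈ N, E n = n) ∧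
  (∀ n₁ ∈ N, ∀ n₂ ∈ N, ∀ m, E (n₁ * m * n₂) = n₁ * E m * n₂) ∧
  (∀ m, τ (E m) = τ m)

/-- `A` and `C` are free with amalgamation over `B` with respect to `E = E_B`. -/
def AreFreeWithAmalgamation (E : M →ₗ[ℂ] M) (A C : Subalgebra ℂ M) : Prop :=
  ∀ l : List (M × Bool), l ≠ [] →
    (∀ q ∈ l, (if q.2 then q.1 ∈ A else q.1 ∈ C) ∧ E q.1 = 0) →
    l.Chain' (fun q r => q.2 ≠ r.2) →
    E (l.map Prod.fst).prod = 0

/-- The `τ_p`-preserving conditional expectation of the corner `pMp` onto `W*(Bp)`: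
in the setting where `p` is a nonzero projection in `(M, τ)`, commuting with a
W*-subalgebra `B`, independent of `B`, and `B`-free from `X = X*`, it is given by
`E^{(pMp)}_{Bp}(pmp) = α⁻¹ E^{(M)}_B(pmp) · p`, where `α = τ(p)`. -/
theorem corner_condExp_formula
    (τ : M →ₗ[ℂ] ℂ)
    (htrace1 : τ 1 = 1)
    (htracial : ∀ a b : M, τ (a * b) = τ (b * a))
    (hstar : ∀ a : M, τ (star a) = starRingEnd ℂ (τ a))
    (hfaithful : ∀ a : M, τ (star a * a) = 0 → a = 0)
    (B : Subalgebra ℂ M) (hBstar : ∀ b ∈ B, star b ∈ B)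
    (X : M) (hX : IsSelfAdjoint X)
    (p : M) (hproj : p * p = p ∧ star p = p) (hp0 : p ≠ 0)
    (hcomm : ∀ b ∈ B, b * p = p * b)
    (α : ℂ) (hα : α = τ p)
    -- `p` is independent from `B` with respect to `τ`
    (hindep : ∀ b ∈ B, τ (b * p) = τ b * τ p)
    (EB : M →ₗ[ℂ] M) (hEB : IsCondExp τ B EB)
    -- `p` is `B`-free from `X`
    (hfree : AreFreeWithAmalgamation EB (Algebra.adjoin ℂ ((B : Set M) ∪ {X}))
      (Algebra.adjoin ℂ ((B : Set M) ∪ {p})))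
    -- the `τ_p`-preserving conditional expectation of `pMp` onto `W*(Bp)`
    (E₂ : M →ₗ[ℂ] M)
    (hE₂range : ∀ m : M, ∃ b ∈ B, E₂ (p * m * p) = b * p)
    (hE₂fix : ∀ b ∈ B, E₂ (b * p) = b * p)
    (hE₂mod : ∀ b₁ ∈ B, ∀ b₂ ∈ B, ∀ m : M,
      E₂ ((b₁ * p) * (p * m * p) * (b₂ * p)) = (b₁ * p) * E₂ (p * m * p) * (b₂ * p))
    (hE₂τ : ∀ m : M, τ (E₂ (p * m * p)) = τ (p * m * p)) :
    ∀ m : M, E₂ (p * m * p) = α⁻¹ • (EB (p * m * p) * p) := by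
  intro m
  obtain ⟨hEB1, hEB2, hEB3, hEB4⟩ := hEB
  obtain ⟨hpp, hpstar⟩ := hproj
  have hα0 : α ≠ 0 := by
    rw [hα]
    intro h
    exact hp0 (hfaithful p (by rw [hpstar, hpp, h]))
  obtain ⟨b₁, hb₁, hb₁eq⟩ := hE₂range m
  set c : M := b₁ - α⁻¹ • EB (p * m * p) with hc
  have hcB : c ∈ B := B.sub_mem hb₁ (B.smul_mem (hEB1 _) _)
  have hdiff : E₂ (p * m * p) - α⁻¹ • (EB (p * m * p) * p) = c * p := by
    rw [hb₁eq, hc, sub_mul, smul_mul_assoc]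
  have key : ∀ b ∈ B, τ (b * (c * p)) = 0 := by
    intro b hb
    -- step 1 : τ (b * E₂(pmp)) = τ (b * (p*m*p))
    have e1 : (b * p) * (p * m * p) * (1 * p) = p * (b * m) * p := by
      rw [one_mul]
      calc (b * p) * (p * m * p) * p = b * ((p * p) * (m * (p * p))) := by
            simp only [mul_assoc]
        _ = (b * p) * (m * p) := by rw [hpp]; simp only [mul_assoc]
        _ = (p * b) * (m * p) := by rw [hcomm b hb]
        _ = p * (b * m) * p := by simp only [mul_assoc]
    have e2 : (b * p) * E₂ (p * m * p) * (1 * p) = b * E₂ (p * m * p) := by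
      rw [hb₁eq, one_mul]
      calc (b * p) * (b₁ * p) * p = b * (p * (b₁ * (p * p))) := by
            simp only [mul_assoc]
        _ = b * (p * (b₁ * p)) := by rw [hpp]
        _ = b * ((p * b₁) * p) := by rw [mul_assoc]
        _ = b * ((b₁ * p) * p) := by rw [hcomm b₁ hb₁]
        _ = b * (b₁ * (p * p)) := by simp only [mul_assoc]
        _ = b * (b₁ * p) := by rw [hpp]
    have e3 : b * (p * m * p) = p * (b * m) * p := by
      calc b * (p * m * p) = (b * p) * (m * p) := by simp only [mul_assoc]
        _ = (p * b) * (m * p) := by rw [hcomm b hb]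
        _ = p * (b * m) * p := by simp only [mul_assoc]
    have h1 : τ (b * E₂ (p * m * p)) = τ (b * (p * m * p)) := by
      have := hE₂τ (b * m)
      rw [← e1, hE₂mod b hb 1 B.one_mem m, e2] at this
      rw [this, e3, e1]
    -- step 2 : τ (b * (α⁻¹ • (EB(pmp) * p))) = τ (b * (p*m*p))
    have h2 : τ (b * (α⁻¹ • (EB (p * m * p) * p))) = τ (b * (p * m * p)) := by
      have hbE : τ (b * EB (p * m * p)) = τ (b * (p * m * p)) := by
        have := hEB3 b hb 1 B.one_mem (p * m * p)
        rw [mul_one, mul_one] at this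
        rw [← this, hEB4]
      have hind := hindep (b * EB (p * m * p)) (B.mul_mem hb (hEB1 _))
      calc τ (b * (α⁻¹ • (EB (p * m * p) * p)))
          = α⁻¹ * τ (b * EB (p * m * p) * p) := by
            rw [mul_smul_comm, map_smul, smul_eq_mul, mul_assoc b (EB (p * m * p)) p]
        _ = α⁻¹ * (τ (b * EB (p * m * p)) * τ p) := by rw [hind]
        _ = α⁻¹ * (τ (b * (p * m * p)) * α) := by rw [hbE, hα]
        _ = τ (b * (p * m * p)) := by field_simp
    calc τ (b * (c * p))
        = τ (b * (E₂ (p * m * p) - α⁻¹ • (EB (p * m * p) * p))) := by rw [hdiff]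
      _ = τ (b * E₂ (p * m * p)) - τ (b * (α⁻¹ • (EB (p * m * p) * p))) := by
          rw [mul_sub, map_sub]
      _ = 0 := by rw [h1, h2, sub_self]
  have hzero : c * p = 0 := by
    apply hfaithful
    have hs : star (c * p) * (c * p) = p * (star c * (c * p)) := by
      rw [star_mul, hpstar]; simp only [mul_assoc]
    rw [hs, htracial]
    calc τ (star c * (c * p) * p) = τ (star c * (c * (p * p))) := by
          simp only [mul_assoc]
      _ = τ (star c * (c * p)) := by rw [hpp]
      _ = 0 := key (star c) (hBstar c hcB)
  exact sub_eq_zero.mp (hdiff.trans hzero)
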